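/- Let a, b ∈ ℝ² be unit vectors, let p, q ∈ ℝ², and let ℓ > 0 satisfy ℓ |a × b| > ‖p − q‖. Then the segments {p + t a : t ∈ [−ℓ, ℓ]} and {q + s b : s ∈ [−ℓ, ℓ]} intersect; that is, there exist t, s ∈ [−ℓ, ℓ] with p + t a = q + s b. -/

import Mathlib

/-- The planar cross product `a × b = a₁b₂ − a₂b₁`. -/
def cross (a b : EuclideanSpace ℝ (Fin 2)) : ℝ := a 0 * b 1 - a 1 * b 0

lemma norm_sq_eq (u : EuclideanSpace ℝ (Fin 2)) : ‖u‖ ^ 2 = u 0 ^ 2 + u 1 ^ 2 := by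
  rw [EuclideanSpace.norm_eq, Real.sq_sqrt (by positivity)]
  simp [Fin.sum_univ_two, sq_abs]

lemma abs_cross_le (u v : EuclideanSpace ℝ (Fin 2)) : |cross u v| ≤ ‖u‖ * ‖v‖ := by
  have h1 := norm_sq_eq u
  have h2 := norm_sq_eq v
  have hu : (0:ℝ) ≤ ‖u‖ := norm_nonneg _
  have hv : (0:ℝ) ≤ ‖v‖ := norm_nonneg _
  have key : (cross u v) ^ 2 ≤ (‖u‖ * ‖v‖) ^ 2 := by
    rw [mul_pow, h1, h2]; unfold cross
    nlinarith [sq_nonneg (u 0 * v 0 + u 1 * v 1)]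
  calc |cross u v| = Real.sqrt ((cross u v) ^ 2) := (Real.sqrt_sq_eq_abs _).symm
    _ ≤ Real.sqrt ((‖u‖ * ‖v‖) ^ 2) := Real.sqrt_le_sqrt key
    _ = ‖u‖ * ‖v‖ := Real.sqrt_sq (mul_nonneg hu hv)

/-- If `a, b` are unit vectors, `p, q ∈ ℝ²` and `ℓ > 0` satisfies
`ℓ |a × b| > ‖p − q‖`, then the segments `{p + t a : t ∈ [−ℓ,ℓ]}` and
`{q + s b : s ∈ [−ℓ,ℓ]}` intersect. -/
theorem segments_intersect
    (a b p q : EuclideanSpace ℝ (Fin 2)) (ha : ‖a‖ = 1) (hb : ‖b‖ = 1)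
    (ℓ : ℝ) (hℓ : 0 < ℓ) (h : ‖p - q‖ < ℓ * |cross a b|) :
    ∃ t ∈ Set.Icc (-ℓ) ℓ, ∃ s ∈ Set.Icc (-ℓ) ℓ, p + t • a = q + s • b := by
  have hcpos : 0 < |cross a b| := by
    by_contra hcon
    push_neg at hcon
    have : |cross a b| = 0 := le_antisymm hcon (abs_nonneg _)
    rw [this, mul_zero] at h
    exact absurd h (not_lt.2 (norm_nonneg _))
  have hcne : cross a b ≠ 0 := abs_pos.mp hcpos
  have hdp : ‖q - p‖ = ‖p - q‖ := norm_sub_rev q p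
  refine ⟨cross (q - p) b / cross a b, ?_, -(cross a (q - p)) / cross a b, ?_, ?_⟩
  · have h1 : |cross (q - p) b| ≤ ‖p - q‖ := by
      have := abs_cross_le (q - p) b
      rwa [hb, mul_one, hdp] at this
    rw [Set.mem_Icc, ← abs_le, abs_div, div_le_iff₀ hcpos]
    linarith
  · have h1 : |cross a (q - p)| ≤ ‖p - q‖ := by
      have := abs_cross_le a (q - p)
      rwa [ha, one_mul, hdp] at this
    rw [Set.mem_Icc, ← abs_le, abs_div, abs_neg, div_le_iff₀ hcpos]
    linarith
  · have hcne' : a 0 * b 1 - a 1 * b 0 ≠ 0 := hcne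
    have hcne'' : b 1 * a 0 - b 0 * a 1 ≠ 0 := by rw [mul_comm (b 1), mul_comm (b 0)]; exact hcne'
    ext i
    fin_cases i <;>
    · simp only [PiLp.add_apply, PiLp.smul_apply, PiLp.sub_apply, smul_eq_mul, cross, Fin.zero_eta, Fin.mk_one]
      field_simp
      ring
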